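/- For every u ∈ [0,1], the binary entropy satisfies the quartic bound h(u) ≤ log 2 − 2·(u − 1/2)² − (4/3)·(u − 1/2)⁴, where h(u) = −u·log u − (1−u)·log(1−u) with natural logarithm and the convention 0·log 0 = 0. -/

import Mathlib

/-- Auxiliary inequality: `2t + 2t³/3 ≤ log(1+t) − log(1−t)` for `0 ≤ t < 1`. -/
lemma log_ratio_lb (t : ℝ) (ht0 : 0 ≤ t) (ht1 : t < 1) :
    2 * t + 2 * t ^ 3 / 3 ≤ Real.log (1 + t) - Real.log (1 - t) := by
  set φ : ℝ → ℝ := fun s => Real.log (1 + s) - Real.log (1 - s) - 2 * s - 2 * s ^ 3 / 3 with hφ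
  have hder : ∀ s ∈ Set.Ioo (0:ℝ) t,
      HasDerivAt φ (2 * s ^ 4 / ((1 + s) * (1 - s))) s := by
    intro s hsI
    have h1 : (0:ℝ) < 1 + s := by linarith [hsI.1]
    have h2 : (0:ℝ) < 1 - s := by linarith [hsI.2]
    have d1 : HasDerivAt (fun s : ℝ => Real.log (1 + s)) (1 / (1 + s)) s := by
      have := (Real.hasDerivAt_log h1.ne').comp s ((hasDerivAt_id s).const_add 1)
      simpa [one_div, Function.comp_def] using this
    have d2 : HasDerivAt (fun s : ℝ => Real.log (1 - s)) (-(1 / (1 - s))) s := by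
      have := (Real.hasDerivAt_log h2.ne').comp s ((hasDerivAt_id s).neg.const_add 1)
      simpa [one_div, Function.comp_def] using this
    have d3 : HasDerivAt (fun s : ℝ => 2 * s) 2 s := by
      simpa using (hasDerivAt_id s).const_mul 2
    have d4 : HasDerivAt (fun s : ℝ => 2 * s ^ 3 / 3) (2 * (3 * s ^ 2) / 3) s := by
      have := ((hasDerivAt_pow 3 s).const_mul 2).div_const 3
      simpa using this
    have h := ((d1.sub d2).sub d3).sub d4
    refine h.congr_deriv ?_
    field_simp
    ring
  have hcont : ContinuousOn φ (Set.Icc 0 t) := by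
    have c1 : ContinuousOn (fun s : ℝ => Real.log (1 + s)) (Set.Icc 0 t) := by
      apply Real.continuousOn_log.comp (by fun_prop)
      intro x hx
      simp only [Set.mem_compl_iff, Set.mem_singleton_iff]
      have := hx.1; intro h; linarith
    have c2 : ContinuousOn (fun s : ℝ => Real.log (1 - s)) (Set.Icc 0 t) := by
      apply Real.continuousOn_log.comp (by fun_prop)
      intro x hx
      simp only [Set.mem_compl_iff, Set.mem_singleton_iff]
      have := hx.2; intro h; linarith
    exact ((c1.sub c2).sub (by fun_prop)).sub (by fun_prop)
  have hmono : MonotoneOn φ (Set.Icc 0 t) := by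
    apply monotoneOn_of_deriv_nonneg (convex_Icc 0 t) hcont
    · intro s hs
      rw [interior_Icc] at hs
      exact (hder s hs).differentiableAt.differentiableWithinAt
    · intro s hs
      rw [interior_Icc] at hs
      rw [(hder s hs).deriv]
      have h1 : (0:ℝ) < 1 + s := by linarith [hs.1]
      have h2 : (0:ℝ) < 1 - s := by linarith [hs.2]
      positivity
  have h0 : φ 0 = 0 := by simp [hφ]
  have := hmono ⟨le_refl 0, ht0⟩ ⟨ht0, le_refl t⟩ ht0
  rw [h0] at this
  simp only [hφ] at this
  linarith

/-- Monotone part: the bound holds on `[1/2, 1]` for Mathlib's `binEntropy`. -/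
lemma binEntropy_quartic_upper (u : ℝ) (hu0 : 1/2 ≤ u) (hu1 : u ≤ 1) :
    Real.binEntropy u ≤ Real.log 2 - 2 * (u - 1 / 2) ^ 2 - 4 / 3 * (u - 1 / 2) ^ 4 := by
  set F : ℝ → ℝ := fun v =>
    Real.log 2 - 2 * (v - 1 / 2) ^ 2 - 4 / 3 * (v - 1 / 2) ^ 4 - Real.binEntropy v with hF
  have hder : ∀ v ∈ Set.Ioo (1/2 : ℝ) 1,
      HasDerivAt F
        (-(2 * (2 * (v - 1/2))) - 4/3 * (4 * (v - 1/2)^3) - (Real.log (1 - v) - Real.log v)) v := by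
    intro v hv
    have hv0 : v ≠ 0 := by intro h; rw [h] at hv; linarith [hv.1]
    have hv1 : v ≠ 1 := ne_of_lt hv.2
    have dB : HasDerivAt Real.binEntropy (Real.log (1 - v) - Real.log v) v := by
      have := (Real.differentiableAt_binEntropy hv0 hv1).hasDerivAt
      rwa [Real.deriv_binEntropy] at this
    have dP : HasDerivAt (fun v : ℝ => (v - 1/2)) 1 v := by
      simpa using (hasDerivAt_id v).sub_const (1/2)
    have d2 : HasDerivAt (fun v : ℝ => 2 * (v - 1/2)^2) (2 * (2 * (v - 1/2) * 1)) v := by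
      exact ((dP.pow 2).const_mul 2).congr_deriv (by ring)
    have d4 : HasDerivAt (fun v : ℝ => 4/3 * (v - 1/2)^4) (4/3 * (4 * (v - 1/2)^3 * 1)) v := by
      exact ((dP.pow 4).const_mul (4/3)).congr_deriv (by ring)
    have := (((hasDerivAt_const v (Real.log 2)).sub d2).sub d4).sub dB
    refine this.congr_deriv ?_
    ring
  have hcont : ContinuousOn F (Set.Icc (1/2 : ℝ) 1) := by
    apply ContinuousOn.sub (by fun_prop) Real.binEntropy_continuous.continuousOn
  have hmono : MonotoneOn F (Set.Icc (1/2 : ℝ) 1) := by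
    apply monotoneOn_of_deriv_nonneg (convex_Icc _ _) hcont
    · intro v hv
      rw [interior_Icc] at hv
      exact (hder v hv).differentiableAt.differentiableWithinAt
    · intro v hv
      rw [interior_Icc] at hv
      rw [(hder v hv).deriv]
      set t : ℝ := 2 * v - 1 with ht
      have ht0 : 0 ≤ t := by rw [ht]; linarith [hv.1]
      have ht1 : t < 1 := by rw [ht]; linarith [hv.2]
      have hlog := log_ratio_lb t ht0 ht1
      have e1 : Real.log v = Real.log (1 + t) - Real.log 2 := by
        rw [← Real.log_div (by linarith) (by norm_num)]
        congr 1; rw [ht]; ring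
      have e2 : Real.log (1 - v) = Real.log (1 - t) - Real.log 2 := by
        rw [← Real.log_div ?_ (by norm_num)]
        · congr 1; rw [ht]; ring
        · rw [ht]; intro h; linarith [hv.2]
      rw [e1, e2] at *
      have hvt : v - 1/2 = t / 2 := by rw [ht]; ring
      rw [hvt]
      have : 2 * t + 2 * t ^ 3 / 3 ≤ (Real.log (1 + t) - Real.log 2) - (Real.log (1 - t) - Real.log 2) := by
        linarith
      nlinarith [this]
  have h0 : F (1/2) = 0 := by
    have : Real.binEntropy (1/2 : ℝ) = Real.log 2 := by
      rw [show (1/2 : ℝ) = 2⁻¹ by norm_num, Real.binEntropy_two_inv]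
    simp [hF, this]
  have := hmono ⟨le_refl _, by linarith⟩ ⟨hu0, hu1⟩ hu0
  rw [h0] at this
  simp only [hF] at this
  linarith

/-- The binary entropy function `h(u) = -u log u - (1-u) log(1-u)` (natural logarithm,
with the convention `0 log 0 = 0`, which holds since `Real.log 0 = 0`). -/
noncomputable def binEntropy (u : ℝ) : ℝ :=
  -(u * Real.log u) - (1 - u) * Real.log (1 - u)

/-- **Quartic bound for the binary entropy.**  For every `u ∈ [0,1]`,
`h(u) ≤ log 2 - 2 (u - 1/2)² - (4/3) (u - 1/2)⁴`. -/
theorem binEntropy_quartic_bound (u : ℝ) (hu0 : 0 ≤ u) (hu1 : u ≤ 1) :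
    binEntropy u ≤ Real.log 2 - 2 * (u - 1 / 2) ^ 2 - 4 / 3 * (u - 1 / 2) ^ 4 := by
  have heq : binEntropy u = Real.binEntropy u := by
    unfold binEntropy Real.binEntropy
    rw [Real.log_inv, Real.log_inv]
    ring
  rw [heq]
  rcases le_or_gt (1/2) u with h | h
  · exact binEntropy_quartic_upper u h hu1
  · have := binEntropy_quartic_upper (1 - u) (by linarith) (by linarith)
    rw [Real.binEntropy_one_sub] at this
    have e : (1 - u - 1/2) ^ 2 = (u - 1/2)^2 := by ring
    have e4 : (1 - u - 1/2) ^ 4 = (u - 1/2)^4 := by ring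
    rw [e, e4] at this
    exact this
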